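/- arXiv:0704.1700 — 5 statements merged into one kernel-verified Lean document; each statement's English description precedes it below -/
import Mathlib

section
/- Let π₀ be a normal subgroup of a finite group π and let M be a π-lattice on which π₀ acts trivially. Then M is an invertible π-lattice if and only if M is an invertible π/π₀-lattice. -/
/-- A `π`-lattice is a permutation lattice if it has a `ℤ`-basis permuted by the group. -/
def IsPermLattice (G : Type*) [Group G] (M : Type*) [AddCommGroup M]
    [DistribMulAction G M] : Prop :=
  ∃ (ι : Type) (_ : Fintype ι) (b : Module.Basis ι ℤ M), ∀ (g : G) (i : ι), ∃ j, g • b i = b j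

/-- The induced action of `G ⧸ π₀` on a `G`-module on which `π₀` acts trivially. -/
def quotAction {G : Type*} [Group G] (π₀ : Subgroup G) [π₀.Normal]
    {M : Type*} [AddCommGroup M] [DistribMulAction G M]
    (htriv : ∀ h ∈ π₀, ∀ x : M, h • x = x) :
    DistribMulAction (G ⧸ π₀) M :=
  DistribMulAction.compHom M
    (QuotientGroup.lift π₀ (DistribMulAction.toAddMonoidEnd G M)
      (fun h hh => by
        ext x
        exact htriv h hh x))

/-- A `π`-lattice is invertible if it is an equivariant direct summand of a
permutation lattice (a finite free `ℤ`-module with the group permuting coordinates). -/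
def IsInvLattice (G : Type*) [Group G] (M : Type*) [AddCommGroup M]
    [DistribMulAction G M] : Prop :=
  ∃ (ι : Type) (_ : Fintype ι) (ρ : G →* Equiv.Perm ι)
    (f : M →+ (ι → ℤ)) (r : (ι → ℤ) →+ M),
    (∀ (g : G) (x : M) (i : ι), f (g • x) i = f x ((ρ g)⁻¹ i)) ∧
    (∀ (g : G) (v : ι → ℤ), r (fun i => v ((ρ g)⁻¹ i)) = g • r v) ∧
    (∀ x : M, r (f x) = x)

/-- If `π₀ ⊴ π` acts trivially on the `π`-lattice `M`, then `M` is an invertible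
`π`-lattice if and only if it is an invertible `π/π₀`-lattice. -/
theorem isInvLattice_iff_quotient (G : Type*) [Group G] (π₀ : Subgroup G) [π₀.Normal]
    (M : Type*) [AddCommGroup M] [DistribMulAction G M]
    [Module.Finite ℤ M] [Module.Free ℤ M]
    (htriv : ∀ h ∈ π₀, ∀ x : M, h • x = x) :
    IsInvLattice G M ↔
      (letI := quotAction π₀ htriv; IsInvLattice (G ⧸ π₀) M) := by
  letI := quotAction π₀ htriv
  have hq : ∀ (g : G) (x : M), (QuotientGroup.mk g : G ⧸ π₀) • x = g • x := fun g x => rfl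
  constructor
  · rintro ⟨ι, hι, ρ, f, r, hf, hr, hrf⟩
    -- the setoid of π₀-orbits on ι
    let s : Setoid ι :=
      ⟨fun i j => ∃ h : π₀, ρ h i = j,
        fun i => ⟨1, by simp⟩,
        fun {i j} ⟨h, hh⟩ => ⟨h⁻¹, by simp [← hh]⟩,
        fun {i j k} ⟨h, hh⟩ ⟨h', hh'⟩ => ⟨h' * h, by simp [mul_comm, ← hh, ← hh',
          map_mul, Equiv.Perm.mul_apply]⟩⟩
    haveI : DecidableRel s.r := fun a b => Classical.dec _
    haveI : DecidableEq (Quotient s) := fun a b => Classical.dec _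
    haveI : Fintype (Quotient s) := Quotient.fintype s
    -- g sends orbits to orbits
    have hcong : ∀ (g : G) (a b : ι), s.r a b → s.r (ρ g a) (ρ g b) := by
      rintro g a b ⟨h, hh⟩
      refine ⟨⟨g * h * g⁻¹, Subgroup.Normal.conj_mem ‹π₀.Normal› h h.2 g⟩, ?_⟩
      simp [map_mul, Equiv.Perm.mul_apply, ← hh]
    -- the permutation representation of G on orbits
    let ρ₂ : G →* Equiv.Perm (Quotient s) :=
      { toFun := fun g =>
          { toFun := Quotient.map (ρ g) (hcong g)
            invFun := Quotient.map (ρ g⁻¹) (hcong g⁻¹)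
            left_inv := fun q => Quotient.inductionOn q (fun i => by simp)
            right_inv := fun q => Quotient.inductionOn q (fun i => by simp) }
        map_one' := by
          ext q
          refine Quotient.inductionOn q (fun i => ?_)
          simp
        map_mul' := fun g g' => by
          ext q
          refine Quotient.inductionOn q (fun i => ?_)
          simp [Equiv.Perm.mul_apply] }
    have hρ₂ : ∀ (g : G) (i : ι), ρ₂ g ⟦i⟧ = ⟦ρ g i⟧ := fun g i => rfl
    -- it kills π₀
    have hker : ∀ h ∈ π₀, ρ₂ h = 1 := by
      intro h hh
      ext q
      refine Quotient.inductionOn q (fun i => ?_)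
      show (⟦ρ h i⟧ : Quotient s) = ⟦i⟧
      exact Quotient.sound (s.symm ⟨⟨h, hh⟩, rfl⟩)
    let ρ' : G ⧸ π₀ →* Equiv.Perm (Quotient s) := QuotientGroup.lift π₀ ρ₂ hker
    have hρ' : ∀ (g : G) (i : ι), ρ' (QuotientGroup.mk g) ⟦i⟧ = ⟦ρ g i⟧ := fun g i => rfl
    have hρ'inv : ∀ (g : G) (i : ι),
        (ρ' (QuotientGroup.mk g))⁻¹ ⟦i⟧ = ⟦(ρ g)⁻¹ i⟧ := by
      intro g i
      have : (ρ' (QuotientGroup.mk g))⁻¹ = ρ' (QuotientGroup.mk g⁻¹) := by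
        rw [← map_inv]; rfl
      rw [this, hρ' g⁻¹ i, map_inv]
    -- f x is constant on orbits
    have hconst : ∀ (x : M) (a b : ι), s.r a b → f x a = f x b := by
      rintro x a b ⟨h, hh⟩
      have := hf h x (ρ h a)
      rw [htriv h h.2 x] at this
      simp only [Equiv.Perm.inv_def, Equiv.symm_apply_apply] at this
      rw [← hh, ← this]
    let f' : M →+ (Quotient s → ℤ) :=
      { toFun := fun x => Quotient.lift (f x) (hconst x)
        map_zero' := by
          funext q
          refine Quotient.inductionOn q (fun i => ?_)
          simp
        map_add' := fun x y => by
          funext q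
          refine Quotient.inductionOn q (fun i => ?_)
          simp }
    let r' : (Quotient s → ℤ) →+ M :=
      { toFun := fun v => r (fun i => v ⟦i⟧)
        map_zero' := r.map_zero
        map_add' := fun v w => by
          show r (fun i => v ⟦i⟧ + w ⟦i⟧) = _
          rw [← r.map_add]; rfl }
    refine ⟨Quotient s, ‹_›, ρ', f', r', ?_, ?_, ?_⟩
    · intro g x q
      refine QuotientGroup.induction_on g (fun g => ?_)
      refine Quotient.inductionOn q (fun i => ?_)
      rw [hρ'inv g i]
      show f ((QuotientGroup.mk g : G ⧸ π₀) • x) i = f x ((ρ g)⁻¹ i)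
      rw [hq g x]
      exact hf g x i
    · intro g v
      refine QuotientGroup.induction_on g (fun g => ?_)
      show r (fun i => v ((ρ' (QuotientGroup.mk g))⁻¹ ⟦i⟧)) = _
      have heq : (fun i => v ((ρ' (QuotientGroup.mk g))⁻¹ ⟦i⟧))
          = fun i => (fun j : ι => v ⟦j⟧) ((ρ g)⁻¹ i) := by
        funext i; rw [hρ'inv g i]
      rw [heq, hr g (fun j : ι => v ⟦j⟧), ← hq g]
      rfl
    · intro x
      show r (fun i => Quotient.lift (f x) (hconst x) ⟦i⟧) = x
      exact hrf x
  · rintro ⟨ι, hι, ρ, f, r, hf, hr, hrf⟩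
    refine ⟨ι, hι, ρ.comp (QuotientGroup.mk' π₀), f, r, ?_, ?_, hrf⟩
    · intro g x i
      have := hf (QuotientGroup.mk g) x i
      rw [hq g x] at this
      exact this
    · intro g v
      have := hr (QuotientGroup.mk g) v
      rw [hq g] at this
      exact this
end

section
/- Let π be a finite group and E an invertible π-lattice. If π₀ is a normal subgroup of π, then E^{π₀} is an invertible π/π₀-lattice. -/
/-- The subgroup of `π₀`-fixed points of a `G`-module. -/
def fixedSub (G : Type*) [Group G] (π₀ : Subgroup G) (P : Type*) [AddCommGroup P]
    [DistribMulAction G P] : AddSubgroup P where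
  carrier := {x | ∀ h ∈ π₀, h • x = x}
  add_mem' := by
    intro a b ha hb h hh
    rw [smul_add, ha h hh, hb h hh]
  zero_mem' := by intro h hh; simp
  neg_mem' := by
    intro a ha h hh
    rw [smul_neg, ha h hh]

theorem smul_mem_fixedSub {G : Type*} [Group G] {π₀ : Subgroup G} [π₀.Normal]
    {P : Type*} [AddCommGroup P] [DistribMulAction G P] (g : G) {x : P}
    (hx : x ∈ fixedSub G π₀ P) : g • x ∈ fixedSub G π₀ P := by
  intro h hh
  have h1 : g⁻¹ * h * g⁻¹⁻¹ ∈ π₀ := Subgroup.Normal.conj_mem ‹π₀.Normal› h hh g⁻¹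
  have h2 : (g⁻¹ * h * g) • x = x := by
    have := hx _ h1
    simpa using this
  calc h • g • x = (h * g) • x := (mul_smul h g x).symm
    _ = (g * (g⁻¹ * h * g)) • x := by group
    _ = g • ((g⁻¹ * h * g) • x) := mul_smul _ _ x
    _ = g • x := by rw [h2]

section Aux
variable {G : Type*} [Group G] (π₀ : Subgroup G) [π₀.Normal] {ι : Type} (ρ : G →* Equiv.Perm ι)

def orbSetoid : Setoid ι where
  r i j := ∃ h ∈ π₀, ρ h i = j
  iseqv := by
    refine ⟨fun i => ⟨1, one_mem _, by simp⟩, ?_, ?_⟩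
    · rintro i j ⟨h, hh, rfl⟩
      exact ⟨h⁻¹, inv_mem hh, by rw [← Equiv.Perm.mul_apply, ← map_mul]; simp⟩
    · rintro i j k ⟨h, hh, rfl⟩ ⟨h', hh', rfl⟩
      exact ⟨h' * h, mul_mem hh' hh, by rw [map_mul, Equiv.Perm.mul_apply]⟩

lemma orbSetoid_map (g : G) {i j : ι} (hij : (orbSetoid π₀ ρ).r i j) :
    (orbSetoid π₀ ρ).r (ρ g i) (ρ g j) := by
  obtain ⟨h, hh, rfl⟩ := hij
  refine ⟨g * h * g⁻¹, Subgroup.Normal.conj_mem ‹π₀.Normal› h hh g, ?_⟩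
  rw [← Equiv.Perm.mul_apply, ← map_mul, ← Equiv.Perm.mul_apply, ← map_mul]
  congr 2
  group

def permQ (g : G) : Equiv.Perm (Quotient (orbSetoid π₀ ρ)) where
  toFun := Quotient.map' (ρ g) (fun _ _ => orbSetoid_map π₀ ρ g)
  invFun := Quotient.map' (ρ g⁻¹) (fun _ _ => orbSetoid_map π₀ ρ g⁻¹)
  left_inv q := Quotient.inductionOn q fun i => by
    simp only [Quotient.map'_mk'']
    congr 1
    rw [map_inv]; exact Equiv.symm_apply_apply _ _
  right_inv q := Quotient.inductionOn q fun i => by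
    simp only [Quotient.map'_mk'']
    congr 1
    rw [map_inv]; exact Equiv.apply_symm_apply _ _

@[simp] lemma permQ_mk (g : G) (i : ι) :
    permQ π₀ ρ g (Quotient.mk (orbSetoid π₀ ρ) i) = Quotient.mk _ (ρ g i) := rfl

@[simp] lemma permQ_inv_mk (g : G) (i : ι) :
    (permQ π₀ ρ g)⁻¹ (Quotient.mk (orbSetoid π₀ ρ) i) = Quotient.mk _ (ρ g⁻¹ i) := rfl

def permHomQ : G →* Equiv.Perm (Quotient (orbSetoid π₀ ρ)) where
  toFun := permQ π₀ ρ
  map_one' := Equiv.ext fun q => Quotient.inductionOn q fun i => by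
    simp [permQ_mk]
  map_mul' g g' := Equiv.ext fun q => Quotient.inductionOn q fun i => by
    simp [permQ_mk, map_mul]

end Aux

/-- If `E` is an invertible `π`-lattice and `π₀ ⊴ π`, then the fixed submodule
`E^{π₀}` is an invertible `π/π₀`-lattice: an equivariant direct summand of a
finite free `ℤ`-module on which `π/π₀` acts by permuting coordinates. -/
theorem fixedSub_isInvLattice (G : Type*) [Group G] (π₀ : Subgroup G) [π₀.Normal]
    (E : Type*) [AddCommGroup E] [DistribMulAction G E]
    [Module.Finite ℤ E] [Module.Free ℤ E]
    (hE : IsInvLattice G E) :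
    ∃ (ι : Type) (_ : Fintype ι) (ρ : G ⧸ π₀ →* Equiv.Perm ι)
      (f : fixedSub G π₀ E →+ (ι → ℤ)) (r : (ι → ℤ) →+ fixedSub G π₀ E),
      (∀ (g : G) (x : fixedSub G π₀ E) (i : ι),
        f ⟨g • (x : E), smul_mem_fixedSub g x.2⟩ i = f x ((ρ (g : G ⧸ π₀))⁻¹ i)) ∧
      (∀ (g : G) (v : ι → ℤ),
        r (fun i => v ((ρ (g : G ⧸ π₀))⁻¹ i)) =
          ⟨g • ((r v : fixedSub G π₀ E) : E), smul_mem_fixedSub g (r v).2⟩) ∧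
      (∀ x, r (f x) = x) := by
  classical
  obtain ⟨ι, hι, ρ, f, r, hf, hr, hrf⟩ := hE
  haveI := hι
  haveI : Finite ι := Finite.of_fintype ι
  set s := orbSetoid π₀ ρ with hs
  -- f is constant on orbits for fixed points
  have const : ∀ x : E, x ∈ fixedSub G π₀ E → ∀ i j : ι, s.r i j → f x i = f x j := by
    rintro x hx i j ⟨h, hh, rfl⟩
    have key := hf h⁻¹ x i
    rw [hx h⁻¹ (inv_mem hh)] at key
    rw [key, map_inv, inv_inv]
  have liftcond : ∀ h ∈ π₀, permHomQ π₀ ρ h = 1 := by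
    intro h hh
    refine Equiv.ext fun q => Quotient.inductionOn q fun i => ?_
    show permQ π₀ ρ h (Quotient.mk s i) = Quotient.mk s i
    rw [permQ_mk]
    exact Quotient.sound ⟨h⁻¹, inv_mem hh, by rw [map_inv]; exact Equiv.symm_apply_apply _ _⟩
  let ρ' : G ⧸ π₀ →* Equiv.Perm (Quotient s) := QuotientGroup.lift π₀ (permHomQ π₀ ρ) liftcond
  have hρ'inv : ∀ (g : G) (i : ι),
      (ρ' (g : G ⧸ π₀))⁻¹ (Quotient.mk s i) = Quotient.mk s (ρ g⁻¹ i) := fun g i => rfl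
  have memr : ∀ v : Quotient s → ℤ, r (fun i => v (Quotient.mk s i)) ∈ fixedSub G π₀ E := by
    intro v h hh
    rw [← hr h (fun i => v (Quotient.mk s i))]
    congr 1
    funext i
    exact congrArg v (Quotient.sound ⟨h, hh, Equiv.apply_symm_apply _ _⟩)
  let f' : fixedSub G π₀ E →+ (Quotient s → ℤ) :=
    { toFun := fun x c => f x.1 c.out
      map_zero' := by funext c; simp
      map_add' := by intro a b; funext c; simp }
  let r' : (Quotient s → ℤ) →+ fixedSub G π₀ E :=
    { toFun := fun v => ⟨r (fun i => v (Quotient.mk s i)), memr v⟩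
      map_zero' := Subtype.ext (map_zero r)
      map_add' := by
        intro a b
        apply Subtype.ext
        show r (fun i => (a + b) (Quotient.mk s i)) = _
        have : (fun i => (a + b) (Quotient.mk s i)) =
            (fun i => a (Quotient.mk s i)) + (fun i => b (Quotient.mk s i)) := rfl
        rw [this, map_add]
        rfl }
  refine ⟨Quotient s, Fintype.ofFinite _, ρ', f', r', ?_, ?_, ?_⟩
  · intro g x i
    show f (g • x.1) i.out = f x.1 ((ρ' (g : G ⧸ π₀))⁻¹ i).out
    rw [hf]
    have h1 : ((ρ' (g : G ⧸ π₀))⁻¹ i) = Quotient.mk s (ρ g⁻¹ i.out) := by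
      conv_lhs => rw [← Quotient.out_eq i]
      exact hρ'inv g i.out
    rw [h1, const x.1 x.2 _ _ (Quotient.exact (Quotient.out_eq _)), map_inv]
  · intro g v
    apply Subtype.ext
    show r (fun i => v ((ρ' (g : G ⧸ π₀))⁻¹ (Quotient.mk s i))) =
      g • r (fun i => v (Quotient.mk s i))
    rw [← hr g (fun i => v (Quotient.mk s i))]
    congr 1
    funext i
    rw [hρ'inv g i, map_inv]
  · intro x
    apply Subtype.ext
    show r (fun i => f x.1 (Quotient.mk s i).out) = x.1
    conv_rhs => rw [← hrf x.1]
    congr 1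
    funext i
    exact const x.1 x.2 _ _ (Quotient.exact (Quotient.out_eq _))
end

section
/- Let π be a finite group acting on a field L by automorphisms, let M₁ ⊆ M₂ be π-lattices with quotient N = M₂/M₁, and extend the π-action multiplicatively to the group L(M₁)^× · M₂ inside the multiplicative group of L(M₂). If H^1(π', L(M₁)^×) = 0 for all subgroups π' ≤ π and N is an invertible π-lattice, then the exact sequence 0 → L(M₁)^× → L(M₁)^× · M₂ → N → 0 of π-modules splits. -/
/-- Splitting criterion (abstracting the situation `A = L(M₁)ˣ`, `B = L(M₁)ˣ · M₂ ⊆ L(M₂)ˣ`,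
`N = M₂/M₁`): let `π` act on multiplicative abelian groups `A` and `B` and on a lattice `N`,
let `1 → A → B → N → 0` be an exact sequence of `π`-modules (with `i` the injection and `q`
the surjection onto the multiplicatively-written lattice `N`). If `H¹(π', A) = 1` for all
subgroups `π' ≤ π` (every `1`-cocycle is a coboundary, as furnished by Hilbert 90 for
`A = L(M₁)ˣ`) and `N` is an invertible `π`-lattice, then the sequence splits: `q` admits a
`π`-equivariant multiplicative section. -/
theorem splitting_of_h1_trivial_of_invertible
    (G : Type*) [Group G] (A B : Type*) [CommGroup A] [CommGroup B]
    [MulDistribMulAction G A] [MulDistribMulAction G B]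
    (N : Type*) [AddCommGroup N] [DistribMulAction G N]
    [Module.Finite ℤ N] [Module.Free ℤ N]
    (i : A →* B) (q : B →* Multiplicative N)
    (hi : Function.Injective i)
    (hieq : ∀ (g : G) (a : A), i (g • a) = g • i a)
    (hq : Function.Surjective q)
    (hqeq : ∀ (g : G) (b : B), (q (g • b)).toAdd = g • (q b).toAdd)
    (hexact : MonoidHom.ker q = MonoidHom.range i)
    (hH1 : ∀ (H : Subgroup G) (f : H → A),
      (∀ g h : H, f (g * h) = (g : G) • f h * f g) →
      ∃ a : A, ∀ g : H, f g = (g : G) • a * a⁻¹)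
    (hN : IsInvLattice G N) :
    ∃ s : Multiplicative N →* B,
      (∀ (g : G) (n : N), s (Multiplicative.ofAdd (g • n)) = g • s (Multiplicative.ofAdd n)) ∧
      ∀ n : Multiplicative N, q (s n) = n := by
  classical
  obtain ⟨ι, _inst, ρ, f, r, hf, hr, hrf⟩ := hN
  -- standard basis vectors
  set e : ι → (ι → ℤ) := fun j => Pi.single j 1 with he
  have keyA : ∀ (g : G) (j : ι), r (e (ρ g j)) = g • r (e j) := by
    intro g j
    rw [← hr g (e j)]
    congr 1
    funext k
    simp only [he, Pi.single_apply, Equiv.Perm.inv_eq_iff_eq]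
  -- orbit setoid on ι
  let sd : Setoid ι :=
    ⟨fun x y => ∃ g : G, ρ g y = x,
     ⟨fun x => ⟨1, by simp⟩,
      fun {x y} h => by obtain ⟨g, hg⟩ := h; exact ⟨g⁻¹, by rw [← hg]; simp⟩,
      fun {x y z} h h' => by
        obtain ⟨g, hg⟩ := h; obtain ⟨g', hg'⟩ := h'
        exact ⟨g * g', by rw [map_mul, Equiv.Perm.mul_apply, hg', hg]⟩⟩⟩
  -- invariant lifts on orbit representatives
  have key : ∀ c : Quotient sd, ∃ b : B, (q b).toAdd = r (e c.out) ∧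
      ∀ g : G, ρ g c.out = c.out → g • b = b := by
    intro c
    obtain ⟨b₀, hb₀⟩ := hq (Multiplicative.ofAdd (r (e c.out)))
    have hqb₀ : (q b₀).toAdd = r (e c.out) := by rw [hb₀]; rfl
    set x := c.out with hx
    let H : Subgroup G :=
      { carrier := {g | ρ g x = x}
        one_mem' := by simp
        mul_mem' := by
          intro a b ha hb
          simp only [Set.mem_setOf_eq] at *
          rw [map_mul, Equiv.Perm.mul_apply, hb, ha]
        inv_mem' := by
          intro a ha
          simp only [Set.mem_setOf_eq] at *
          rw [map_inv]
          exact Equiv.Perm.inv_eq_iff_eq.mpr ha.symm }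
    have mem : ∀ h : H, (h : G) • b₀ * b₀⁻¹ ∈ MonoidHom.range i := by
      intro h
      rw [← hexact, MonoidHom.mem_ker, map_mul, map_inv]
      have hfix : ρ (h : G) x = x := h.2
      have : (q ((h : G) • b₀)).toAdd = (q b₀).toAdd := by
        rw [hqeq, hqb₀, ← keyA (h : G) x, hfix]
      have hqq : q ((h : G) • b₀) = q b₀ := by
        have := congrArg Multiplicative.ofAdd this
        simpa using this
      rw [hqq, mul_inv_cancel]
    choose a ha using mem
    have cocycle : ∀ g h : H, a (g * h) = (g : G) • a h * a g := by
      intro g h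
      apply hi
      rw [map_mul, hieq, ha, ha, ha]
      rw [smul_mul', smul_inv', ← mul_smul]
      push_cast
      group
    obtain ⟨a₀, ha₀⟩ := hH1 H a cocycle
    refine ⟨b₀ * (i a₀)⁻¹, ?_, ?_⟩
    · have h1 : q (i a₀) = 1 := by
        have : i a₀ ∈ MonoidHom.ker q := by rw [hexact]; exact ⟨a₀, rfl⟩
        exact this
      rw [map_mul, map_inv, h1, inv_one, mul_one, hqb₀]
    · intro g hg
      have hgH : g ∈ H := hg
      have h1 := ha ⟨g, hgH⟩
      have h2 := ha₀ ⟨g, hgH⟩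
      rw [smul_mul', smul_inv', ← hieq]
      have hb : g • b₀ = i (a ⟨g, hgH⟩) * b₀ := by
        rw [h1]; group
      rw [hb, h2, map_mul, map_inv, hieq]
      simp [mul_comm, mul_left_comm, mul_assoc]
  choose b₁ hb₁q hb₁inv using key
  -- transporting representatives along orbits
  have rep : ∀ j : ι, ∃ g : G, ρ g (Quotient.mk sd j).out = j := by
    intro j
    have h : sd.r (Quotient.mk sd j).out j :=
      Quotient.exact (Quotient.out_eq (Quotient.mk sd j))
    exact sd.symm h
  choose gi hgi using rep
  set b : ι → B := fun j => gi j • b₁ (Quotient.mk sd j) with hbdef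
  have qb : ∀ j : ι, (q (b j)).toAdd = r (e j) := by
    intro j
    rw [hbdef]
    simp only
    rw [hqeq, hb₁q, ← keyA, hgi]
  have equivb : ∀ (g : G) (j : ι), g • b j = b (ρ g j) := by
    intro g j
    have hc : Quotient.mk sd (ρ g j) = Quotient.mk sd j := Quotient.sound ⟨g, rfl⟩
    have hout : (Quotient.mk sd (ρ g j)).out = (Quotient.mk sd j).out := by rw [hc]
    have hgi2 : ρ (gi (ρ g j)) (Quotient.mk sd j).out = ρ g j := by
      have := hgi (ρ g j); rwa [hout] at this
    set c := Quotient.mk sd j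
    set g' := gi (ρ g j)
    have hstab : ρ (g'⁻¹ * (g * gi j)) c.out = c.out := by
      rw [map_mul, Equiv.Perm.mul_apply, map_mul, Equiv.Perm.mul_apply, hgi j, map_inv]
      exact Equiv.Perm.inv_eq_iff_eq.mpr hgi2.symm
    have hinv := hb₁inv c _ hstab
    calc g • b j = (g * gi j) • b₁ c := by rw [hbdef]; simp only; rw [mul_smul]
    _ = g' • ((g'⁻¹ * (g * gi j)) • b₁ c) := by rw [← mul_smul]; group
    _ = g' • b₁ c := by rw [hinv]
    _ = b (ρ g j) := by rw [hbdef]; simp only [hc]; rfl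
  -- the section
  refine ⟨MonoidHom.mk' (fun n => ∏ j, b j ^ (f n.toAdd j)) ?_, ?_, ?_⟩
  · intro m n
    rw [← Finset.prod_mul_distrib]
    apply Finset.prod_congr rfl
    intro j _
    have : (m * n).toAdd = m.toAdd + n.toAdd := rfl
    rw [this, map_add, Pi.add_apply, zpow_add]
  · intro g n
    simp only [MonoidHom.mk'_apply, toAdd_ofAdd]
    have step1 : ∀ j : ι, f (g • n) j = f n ((ρ g)⁻¹ j) := fun j => hf g n j
    calc ∏ j, b j ^ (f (g • n) j) = ∏ j, b j ^ (f n ((ρ g)⁻¹ j)) := by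
          apply Finset.prod_congr rfl; intro j _; rw [step1]
    _ = ∏ j, b (ρ g j) ^ (f n ((ρ g)⁻¹ (ρ g j))) :=
          (Equiv.prod_comp (ρ g) (fun j => b j ^ (f n ((ρ g)⁻¹ j)))).symm
    _ = ∏ j, (g • b j) ^ (f n j) := by
          apply Finset.prod_congr rfl; intro j _
          rw [Equiv.Perm.inv_def, Equiv.symm_apply_apply, equivb]
    _ = g • ∏ j, b j ^ (f n j) := by
          rw [Finset.smul_prod']
          apply Finset.prod_congr rfl; intro j _
          exact (map_zpow (MulDistribMulAction.toMonoidHom B g) (b j) (f n j)).symm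
  · intro n
    simp only [MonoidHom.mk'_apply]
    have : (q (∏ j, b j ^ (f n.toAdd j))).toAdd = n.toAdd := by
      rw [map_prod, toAdd_prod]
      have : ∀ j : ι, (q (b j ^ (f n.toAdd j))).toAdd = f n.toAdd j • r (e j) := by
        intro j
        rw [map_zpow, toAdd_zpow, qb]
      rw [Finset.sum_congr rfl (fun j _ => this j)]
      have : ∑ j, f n.toAdd j • r (e j) = r (∑ j, f n.toAdd j • e j) := by
        rw [map_sum]
        apply Finset.sum_congr rfl
        intro j _
        rw [map_zsmul]
      rw [this]
      have : ∑ j, f n.toAdd j • e j = f n.toAdd := by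
        funext k
        simp only [he, Finset.sum_apply, Pi.smul_apply, Pi.single_apply, smul_eq_mul,
          mul_ite, mul_one, mul_zero]
        rw [Finset.sum_ite_eq Finset.univ k (fun j => f n.toAdd j)]
        simp
      rw [this, hrf]
    have h2 := congrArg Multiplicative.ofAdd this
    simpa using h2
end

section
/- Let π = ⟨ρ⟩ be a cyclic group of order 2p with p an odd prime, write σ = ρ² and τ = ρ^p. Let M be the free abelian group on u₁,...,u_{p-1}, w₁,...,w_{p-1} with π-action determined by: σ sends uᵢ ↦ u_{i+1} for i < p-1, u_{p-1} ↦ -(u₁+...+u_{p-1}), similarly on the wᵢ; τ sends wᵢ ↦ wᵢ and uᵢ ↦ -uᵢ + wᵢ - w_{i-1} (where w₀ := -(w₁+...+w_{p-1})). Then M is isomorphic as ℤ[π]-module to ℤ[π]/⟨Φ_p(ρ)Φ_{2p}(ρ)⟩, equivalently to ℤ[⟨τ⟩] ⊗_ℤ ℤ[⟨σ⟩]/Φ_p(σ). -/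
open Polynomial

/-- The cyclic group of order `2p`, written multiplicatively. -/
abbrev cyc2p (p : ℕ) := Multiplicative (ZMod (2 * p))

/-- The generator `ρ` of the cyclic group of order `2p`. -/
def rho (p : ℕ) : cyc2p p := Multiplicative.ofAdd (1 : ZMod (2 * p))

/-- The group ring `ℤ[π]` for `π` cyclic of order `2p`. -/
abbrev grpRing (p : ℕ) := MonoidAlgebra ℤ (cyc2p p)

/-- `ρ` viewed inside the group ring. -/
noncomputable def rhoE (p : ℕ) : grpRing p := MonoidAlgebra.of ℤ (cyc2p p) (rho p)

open Finset

private lemma evenGeomSum {R : Type*} [CommRing R] (x : R) (m : ℕ) :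
    ∑ i ∈ range (2 * m), x ^ i = (1 + x) * ∑ j ∈ range m, (x ^ 2) ^ j := by
  induction m with
  | zero => simp
  | succ n ih =>
    have h2 : 2 * (n + 1) = (2 * n + 1) + 1 := by ring
    rw [h2, sum_range_succ, sum_range_succ, ih, sum_range_succ]
    ring

section Shift
variable {R : Type*} [CommRing R] {M : Type*} [AddCommGroup M] [Module R M]
  {p : ℕ} (hp : 3 ≤ p) (σ : R) (v : Fin (p-1) → M)
  (hv : ∀ i : Fin (p-1), σ • v i =
    if h : (i : ℕ) + 1 < p - 1 then v ⟨(i:ℕ)+1, h⟩ else -∑ j, v j)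

include hp hv

private lemma shiftA : ∀ (j : ℕ) (hj : j < p - 1), σ ^ j • v ⟨0, by omega⟩ = v ⟨j, hj⟩ := by
  intro j
  induction j with
  | zero => intro hj; rw [pow_zero, one_smul]
  | succ n ih =>
    intro hj
    have hn : n < p - 1 := by omega
    rw [pow_succ', mul_smul, ih hn, hv, dif_pos hj]

private lemma shiftB : σ ^ (p-1) • v ⟨0, by omega⟩ = -∑ j, v j := by
  have h2 : p - 2 < p - 1 := by omega
  have h3 : σ ^ (p - 1) = σ * σ ^ (p - 2) := by
    have := pow_succ' σ (p-2)
    rwa [show p - 2 + 1 = p - 1 from by omega] at this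
  rw [h3, mul_smul, shiftA hp σ v hv _ h2, hv,
    dif_neg (show ¬(p - 2 + 1 < p - 1) from by omega)]

private lemma shiftC : (∑ i ∈ range p, σ ^ i) • v ⟨0, by omega⟩ = 0 := by
  rw [sum_smul]
  have hsplit : ∑ i ∈ range p, σ ^ i • v ⟨0, by omega⟩
      = ∑ i ∈ range (p-1), σ ^ i • v ⟨0, by omega⟩ + σ ^ (p-1) • v ⟨0, by omega⟩ := by
    have := Finset.sum_range_succ (fun i => σ ^ i • v ⟨0, by omega⟩) (p-1)
    rwa [show p - 1 + 1 = p from by omega] at this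
  have h2 : ∑ i ∈ range (p-1), σ ^ i • v ⟨0, by omega⟩ = ∑ j : Fin (p-1), v j := by
    rw [← Fin.sum_univ_eq_sum_range (fun i => σ ^ i • v ⟨0, by omega⟩) (p-1)]
    exact Finset.sum_congr rfl fun j _ => by rw [shiftA hp σ v hv _ j.isLt]
  rw [hsplit, h2, shiftB hp σ v hv]
  simp

private lemma shiftE : ∀ i : Fin (p-1), (∑ i ∈ range p, σ ^ i) • v i = 0 := by
  intro i
  rw [← shiftA hp σ v hv _ i.isLt, ← mul_smul, mul_comm, mul_smul,
    shiftC hp σ v hv, smul_zero]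

private lemma shiftD (hσp : σ ^ p = 1) : σ • (∑ j, v j) = -(v ⟨0, by omega⟩) := by
  have huni : ∀ j : Fin (p-1), σ • v j = σ ^ ((j:ℕ)+1) • v ⟨0, by omega⟩ := by
    intro j
    conv_lhs => rw [← shiftA hp σ v hv _ j.isLt]
    rw [← mul_smul, ← pow_succ']
  rw [Finset.smul_sum]
  have hs : ∑ j ∈ range (p-1), σ ^ (j+1)
      = σ * (∑ i ∈ range p, σ ^ i) - σ ^ p := by
    have h1 : ∑ i ∈ range p, σ ^ i = ∑ i ∈ range (p-1), σ ^ i + σ ^ (p-1) := by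
      have := Finset.sum_range_succ (fun i => σ ^ i) (p-1)
      rwa [show p - 1 + 1 = p from by omega] at this
    have h2 : ∑ j ∈ range (p-1), σ ^ (j+1) = σ * ∑ j ∈ range (p-1), σ ^ j := by
      rw [mul_sum]; exact sum_congr rfl fun j _ => pow_succ' σ j
    have h3 : σ * σ ^ (p-1) = σ ^ p := by
      have := pow_succ' σ (p-1)
      rw [show p - 1 + 1 = p from by omega] at this
      exact this.symm
    rw [h2, h1, mul_add, h3]
    ring
  calc ∑ j : Fin (p-1), σ • v j = ∑ j : Fin (p-1), σ ^ ((j:ℕ)+1) • v ⟨0, by omega⟩ :=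
        Finset.sum_congr rfl fun j _ => huni j
    _ = ∑ j ∈ range (p-1), σ ^ (j+1) • v ⟨0, by omega⟩ :=
        Fin.sum_univ_eq_sum_range (fun j => σ ^ (j+1) • v ⟨0, by omega⟩) (p-1)
    _ = (∑ j ∈ range (p-1), σ ^ (j+1)) • v ⟨0, by omega⟩ := (sum_smul).symm
    _ = -(v ⟨0, by omega⟩) := by
        rw [hs, sub_smul, mul_smul, shiftC hp σ v hv, smul_zero, zero_sub, hσp, one_smul]

end Shift

set_option maxHeartbeats 2000000

/-- Let `π = ⟨ρ⟩` be cyclic of order `2p` (`p` an odd prime), `σ = ρ²`, `τ = ρ^p`.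
Let `M` be a `ℤ[π]`-module which is free as an abelian group on
`u₁,…,u_{p-1}, w₁,…,w_{p-1}` (indexed here by `Fin (p-1) ⊕ Fin (p-1)`), with action:
`σ : uᵢ ↦ u_{i+1}` for `i < p-1`, `u_{p-1} ↦ -(u₁+⋯+u_{p-1})`, similarly on the `wᵢ`;
`τ : wᵢ ↦ wᵢ`, `uᵢ ↦ -uᵢ + wᵢ - w_{i-1}` where `w₀ := -(w₁+⋯+w_{p-1})`.
Then `M ≅ ℤ[π]/⟨Φ_p(ρ)·Φ_{2p}(ρ)⟩` as `ℤ[π]`-modules. -/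
theorem lattice_M_iso_quotient (p : ℕ) (hp : p.Prime) (hodd : Odd p)
    (M : Type*) [AddCommGroup M] [Module (grpRing p) M]
    (b : Module.Basis (Fin (p - 1) ⊕ Fin (p - 1)) ℤ M)
    -- `u i := b (.inl i)`, `w i := b (.inr i)`
    (hσu : ∀ i : Fin (p - 1), ((rhoE p) ^ 2) • b (.inl i) =
      if h : (i : ℕ) + 1 < p - 1 then b (.inl ⟨(i : ℕ) + 1, h⟩)
      else -∑ j : Fin (p - 1), b (.inl j))
    (hσw : ∀ i : Fin (p - 1), ((rhoE p) ^ 2) • b (.inr i) =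
      if h : (i : ℕ) + 1 < p - 1 then b (.inr ⟨(i : ℕ) + 1, h⟩)
      else -∑ j : Fin (p - 1), b (.inr j))
    (hτw : ∀ i : Fin (p - 1), ((rhoE p) ^ p) • b (.inr i) = b (.inr i))
    (hτu : ∀ i : Fin (p - 1), ((rhoE p) ^ p) • b (.inl i) =
      -b (.inl i) + b (.inr i) -
        (if (i : ℕ) = 0 then -∑ j : Fin (p - 1), b (.inr j)
         else b (.inr ⟨(i : ℕ) - 1, lt_of_le_of_lt (Nat.sub_le _ _) i.isLt⟩))) :
    Nonempty (M ≃ₗ[grpRing p]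
      (grpRing p ⧸ Ideal.span
        {aeval (rhoE p) (cyclotomic p ℤ) * aeval (rhoE p) (cyclotomic (2 * p) ℤ)})) := by
  classical
  have hp2 := hp.two_le
  have hoddp := Nat.odd_iff.mp hodd
  have hp3 : 3 ≤ p := by omega
  obtain ⟨k, hk⟩ := hodd
  have hk1 : 1 ≤ k := by omega
  have h0 : 0 < p - 1 := by omega
  have h1' : 1 < p - 1 := by omega
  set σ : grpRing p := (rhoE p) ^ 2 with hσdef
  set τ : grpRing p := (rhoE p) ^ p with hτdef
  set N : grpRing p := ∑ i ∈ Finset.range p, σ ^ i with hNdef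
  set T : grpRing p := ∑ j ∈ Finset.range (k+1), (σ ^ 2) ^ j with hTdef
  have hρ2p : (rhoE p) ^ (2*p) = 1 := by
    rw [rhoE, ← map_pow]
    have : (rho p) ^ (2*p) = 1 := by rw [rho, ← ofAdd_nsmul]; simp
    rw [this, map_one]
  have hσp : σ ^ p = 1 := by rw [hσdef, ← pow_mul]; exact hρ2p
  have hτ2 : τ ^ 2 = 1 := by rw [hτdef, ← pow_mul, Nat.mul_comm p 2]; exact hρ2p
  have hρστ : τ * σ ^ (k+1) = rhoE p := by
    rw [hτdef, hσdef, ← pow_mul, ← pow_add,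
      show p + 2*(k+1) = 1 + 2*p from by omega, pow_add, pow_one, hρ2p, mul_one]
  have hK2 : (1 + σ) * T = 1 + N := by
    rw [hTdef, ← evenGeomSum σ (k+1),
      show 2 * (k + 1) = p + 1 from by omega, Finset.sum_range_succ, hσp, hNdef]
    ring
  have hss : σ * σ ^ (p-1) = 1 := by
    have := pow_succ' σ (p-1)
    rw [show p - 1 + 1 = p from by omega, hσp] at this
    exact this.symm
  have hfN : aeval (rhoE p) (cyclotomic p ℤ) * aeval (rhoE p) (cyclotomic (2*p) ℤ) = N := by
    haveI : Fact p.Prime := ⟨hp⟩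
    have hndvd : ¬ (2 ∣ p) := by omega
    have h1 : aeval (rhoE p) (expand ℤ 2 (cyclotomic p ℤ))
        = aeval ((rhoE p)^2) (cyclotomic p ℤ) := expand_aeval 2 _ (rhoE p)
    rw [cyclotomic_expand_eq_cyclotomic_mul Nat.prime_two hndvd, map_mul, mul_comm p 2] at h1
    rw [mul_comm, h1, cyclotomic_prime, map_sum, hNdef, hσdef]
    simp [aeval_X_pow]
  -- module facts
  have hAu := shiftA hp3 σ (fun i => b (Sum.inl i)) hσu
  have hAw := shiftA hp3 σ (fun i => b (Sum.inr i)) hσw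
  have hNu : ∀ i, N • b (Sum.inl i) = 0 := by
    intro i; rw [hNdef]; exact shiftE hp3 σ (fun i => b (Sum.inl i)) hσu i
  have hNw : ∀ i, N • b (Sum.inr i) = 0 := by
    intro i; rw [hNdef]; exact shiftE hp3 σ (fun i => b (Sum.inr i)) hσw i
  have hDw : σ • (∑ j : Fin (p-1), b (Sum.inr j)) = -(b (Sum.inr ⟨0, h0⟩)) := by
    have := shiftD hp3 σ (fun i => b (Sum.inr i)) hσw hσp
    exact this
  have hNSw : N • (∑ j : Fin (p-1), b (Sum.inr j)) = 0 := by
    rw [Finset.smul_sum]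
    exact Finset.sum_eq_zero fun j _ => hNw j
  set m : M := b (Sum.inl ⟨0, h0⟩) - ∑ j : Fin (p-1), b (Sum.inr j) with hmdef
  have hτm : τ • m = -b (Sum.inl ⟨0, h0⟩) + b (Sum.inr ⟨0, h0⟩) := by
    have ht1 : τ • b (Sum.inl ⟨0, h0⟩)
        = -b (Sum.inl ⟨0, h0⟩) + b (Sum.inr ⟨0, h0⟩) + ∑ j : Fin (p-1), b (Sum.inr j) := by
      rw [hτu ⟨0, h0⟩, if_pos rfl]; abel
    have ht2 : τ • (∑ j : Fin (p-1), b (Sum.inr j)) = ∑ j : Fin (p-1), b (Sum.inr j) := by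
      rw [Finset.smul_sum]; exact Finset.sum_congr rfl fun j _ => hτw j
    rw [hmdef, smul_sub, ht1, ht2]; abel
  have hσu0 : σ • b (Sum.inl ⟨0, h0⟩) = b (Sum.inl ⟨1, h1'⟩) := by
    have := hAu 1 h1'; rw [pow_one] at this; exact this
  have hστm : (σ - τ) • m = (1 + σ) • b (Sum.inl ⟨0, h0⟩) := by
    rw [sub_smul, hτm, hmdef, smul_sub, hσu0, hDw, add_smul, one_smul, hσu0]
    abel
  have hτm1 : (1 + τ) • m = (1 + σ) • (-(∑ j : Fin (p-1), b (Sum.inr j))) := by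
    rw [add_smul, one_smul, hτm, add_smul, one_smul, smul_neg, hDw, hmdef]
    abel
  have hmul1 : ((σ - τ) * T) • m = b (Sum.inl ⟨0, h0⟩) := by
    rw [mul_comm (σ - τ) T, mul_smul, hστm, ← mul_smul, mul_comm T (1 + σ), hK2, add_smul, one_smul,
      hNu ⟨0, h0⟩, add_zero]
  have hmul2 : (σ * (T * (1 + τ))) • m = b (Sum.inr ⟨0, h0⟩) := by
    rw [mul_smul, mul_smul, hτm1, ← mul_smul T (1 + σ), mul_comm T (1 + σ), hK2, add_smul, one_smul,
      smul_neg, hNSw, neg_zero, add_zero, smul_neg, hDw, neg_neg]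
  have hfm : (aeval (rhoE p) (cyclotomic p ℤ) * aeval (rhoE p) (cyclotomic (2*p) ℤ)) • m = 0 := by
    rw [hfN, hmdef, smul_sub, hNu ⟨0, h0⟩, hNSw, sub_zero]
  set f : grpRing p := aeval (rhoE p) (cyclotomic p ℤ) * aeval (rhoE p) (cyclotomic (2 * p) ℤ)
    with hfdef
  set J : Ideal (grpRing p) := Ideal.span {f} with hJdef
  have hmk : ∀ a b' c : grpRing p, a - b' = c * N → J.mkQ a = J.mkQ b' := by
    intro a b' c h
    have hmem : a - b' ∈ J := by
      rw [hJdef]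
      exact Ideal.mem_span_singleton'.mpr ⟨c, by rw [hfN, ← h]⟩
    have := (Submodule.Quotient.eq J).mpr hmem
    simpa [Submodule.mkQ_apply] using this
  -- the inverse map on the ℤ-basis
  set ψ₀ : M →ₗ[ℤ] (grpRing p ⧸ J) := b.constr ℤ
    (Sum.elim (fun i : Fin (p-1) => J.mkQ (σ ^ (i:ℕ) * ((σ - τ) * T)))
              (fun i : Fin (p-1) => J.mkQ (σ ^ ((i:ℕ)+1) * (T * (1 + τ))))) with hψdef
  have hψl : ∀ i : Fin (p-1), ψ₀ (b (Sum.inl i)) = J.mkQ (σ ^ (i:ℕ) * ((σ - τ) * T)) :=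
    fun i => b.constr_basis ℤ _ (Sum.inl i)
  have hψr : ∀ i : Fin (p-1), ψ₀ (b (Sum.inr i)) = J.mkQ (σ ^ ((i:ℕ)+1) * (T * (1 + τ))) :=
    fun i => b.constr_basis ℤ _ (Sum.inr i)
  have hsum0 : ∑ i ∈ range (p-1), σ ^ i = N - σ ^ (p-1) := by
    have := Finset.sum_range_succ (fun i => σ ^ i) (p-1)
    rw [show p - 1 + 1 = p from by omega] at this
    rw [hNdef, this]; ring
  have hsum1 : ∑ j ∈ range (p-1), σ ^ (j+1) = σ * N - 1 := by
    have h2 : ∑ j ∈ range (p-1), σ ^ (j+1) = σ * ∑ j ∈ range (p-1), σ ^ j := by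
      rw [Finset.mul_sum]; exact Finset.sum_congr rfl fun j _ => pow_succ' σ j
    rw [h2, hsum0, mul_sub, hss]
  have hGu : ∑ j : Fin (p-1), ψ₀ (b (Sum.inl j))
      = J.mkQ ((N - σ ^ (p-1)) * ((σ - τ) * T)) := by
    calc ∑ j : Fin (p-1), ψ₀ (b (Sum.inl j))
        = ∑ j : Fin (p-1), J.mkQ (σ ^ (j:ℕ) * ((σ - τ) * T)) :=
          Finset.sum_congr rfl fun j _ => hψl j
      _ = ∑ j ∈ range (p-1), J.mkQ (σ ^ j * ((σ - τ) * T)) :=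
          Fin.sum_univ_eq_sum_range (fun j => J.mkQ (σ ^ j * ((σ - τ) * T))) (p-1)
      _ = J.mkQ (∑ j ∈ range (p-1), σ ^ j * ((σ - τ) * T)) :=
          (map_sum J.mkQ (fun j => σ ^ j * ((σ - τ) * T)) (range (p-1))).symm
      _ = J.mkQ ((∑ j ∈ range (p-1), σ ^ j) * ((σ - τ) * T)) :=
          congrArg (⇑(J.mkQ)) (Finset.sum_mul (range (p-1)) (fun j => σ ^ j) ((σ - τ) * T)).symm
      _ = _ := by rw [hsum0]
  have hGw : ∑ j : Fin (p-1), ψ₀ (b (Sum.inr j))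
      = J.mkQ ((σ * N - 1) * (T * (1 + τ))) := by
    calc ∑ j : Fin (p-1), ψ₀ (b (Sum.inr j))
        = ∑ j : Fin (p-1), J.mkQ (σ ^ ((j:ℕ)+1) * (T * (1 + τ))) :=
          Finset.sum_congr rfl fun j _ => hψr j
      _ = ∑ j ∈ range (p-1), J.mkQ (σ ^ (j+1) * (T * (1 + τ))) :=
          Fin.sum_univ_eq_sum_range (fun j => J.mkQ (σ ^ (j+1) * (T * (1 + τ)))) (p-1)
      _ = J.mkQ (∑ j ∈ range (p-1), σ ^ (j+1) * (T * (1 + τ))) :=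
          (map_sum J.mkQ (fun j => σ ^ (j+1) * (T * (1 + τ))) (range (p-1))).symm
      _ = J.mkQ ((∑ j ∈ range (p-1), σ ^ (j+1)) * (T * (1 + τ))) :=
          congrArg (⇑(J.mkQ)) (Finset.sum_mul (range (p-1)) (fun j => σ ^ (j+1)) (T * (1 + τ))).symm
      _ = _ := by rw [hsum1]
  -- commutation with σ on the basis
  have hψσb : ∀ s, ψ₀ (σ • b s) = σ • ψ₀ (b s) := by
    rintro (i | i)
    · rw [hσu i, hψl i, ← map_smul, smul_eq_mul]
      by_cases hc : (i:ℕ)+1 < p-1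
      · rw [dif_pos hc, hψl ⟨(i:ℕ)+1, hc⟩]
        refine hmk _ _ 0 ?_
        show σ ^ ((i:ℕ)+1) * ((σ - τ) * T) - σ * (σ ^ (i:ℕ) * ((σ - τ) * T)) = 0 * N
        rw [pow_succ']; ring
      · rw [dif_neg hc, map_neg, map_sum, hGu, ← map_neg]
        refine hmk _ _ (-((σ - τ) * T)) ?_
        have hps : σ * σ ^ ((i:ℕ)) = σ ^ (p-1) := by
          rw [← pow_succ']
          congr 1
          have := i.isLt; omega
        linear_combination (-((σ - τ) * T)) * hps
    · rw [hσw i, hψr i, ← map_smul, smul_eq_mul]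
      by_cases hc : (i:ℕ)+1 < p-1
      · rw [dif_pos hc, hψr ⟨(i:ℕ)+1, hc⟩]
        refine hmk _ _ 0 ?_
        show σ ^ ((i:ℕ)+1+1) * (T * (1 + τ)) - σ * (σ ^ ((i:ℕ)+1) * (T * (1 + τ))) = 0 * N
        rw [pow_succ' σ ((i:ℕ)+1)]; ring
      · rw [dif_neg hc, map_neg, map_sum, hGw, ← map_neg]
        refine hmk _ _ (-(σ * (T * (1 + τ)))) ?_
        have hps : σ ^ ((i:ℕ)+1) = σ ^ (p-1) := by
          congr 1
          have := i.isLt; omega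
        rw [hps]
        linear_combination (-(T * (1 + τ))) * hss
  -- commutation with τ on the basis
  have hψτb : ∀ s, ψ₀ (τ • b s) = τ • ψ₀ (b s) := by
    rintro (i | i)
    · rw [hτu i, hψl i, ← map_smul, smul_eq_mul]
      by_cases hc : (i:ℕ) = 0
      · rw [if_pos hc, map_sub, map_add, map_neg, map_neg, map_sum, hGw, hψl i, hψr i]
        simp only [← map_neg, ← map_add, ← map_sub]
        refine hmk _ _ (σ * (T * (1 + τ))) ?_
        rw [hc]
        linear_combination T * hτ2
      · rw [if_neg hc, map_sub, map_add, map_neg, hψl i, hψr i,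
          hψr ⟨(i:ℕ) - 1, lt_of_le_of_lt (Nat.sub_le _ _) i.isLt⟩]
        simp only [← map_neg, ← map_add, ← map_sub]
        refine hmk _ _ 0 ?_
        have hpw : σ ^ (((i:ℕ) - 1) + 1) = σ ^ (i:ℕ) := by congr 1; omega
        show -(σ ^ (i:ℕ) * ((σ - τ) * T)) + σ ^ ((i:ℕ)+1) * (T * (1 + τ))
            - σ ^ (((i:ℕ) - 1) + 1) * (T * (1 + τ))
            - τ * (σ ^ (i:ℕ) * ((σ - τ) * T)) = 0 * N
        rw [hpw, pow_succ']
        linear_combination (σ ^ (i:ℕ) * T) * hτ2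
    · rw [hτw i, hψr i, ← map_smul, smul_eq_mul]
      refine hmk _ _ 0 ?_
      linear_combination (-(σ ^ ((i:ℕ)+1) * T)) * hτ2
  -- extension of the commutation to the whole ring
  have hext : ∀ r : grpRing p, (∀ s, ψ₀ (r • b s) = r • ψ₀ (b s)) →
      ∀ x, ψ₀ (r • x) = r • ψ₀ x := by
    intro r hb x
    have hx : x ∈ Submodule.span ℤ (Set.range b) := by
      rw [b.span_eq]; exact Submodule.mem_top
    induction hx using Submodule.span_induction with
    | mem y hy => obtain ⟨s, rfl⟩ := hy; exact hb s
    | zero => rw [smul_zero, map_zero, smul_zero]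
    | add y z _ _ hy' hz' => rw [smul_add, map_add, map_add, smul_add, hy', hz']
    | smul z y _ hy' =>
        rw [← smul_comm z r y, LinearMap.map_smul ψ₀ z (r • y), LinearMap.map_smul ψ₀ z y, hy']
        exact smul_comm z r _
  have hPmul : ∀ r s : grpRing p, (∀ x, ψ₀ (r • x) = r • ψ₀ x) →
      (∀ x, ψ₀ (s • x) = s • ψ₀ x) → ∀ x, ψ₀ ((r * s) • x) = (r * s) • ψ₀ x := by
    intro r s hr hs x
    rw [mul_smul, hr, hs, mul_smul]
  have hPpow : ∀ (r : grpRing p), (∀ x, ψ₀ (r • x) = r • ψ₀ x) →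
      ∀ n, ∀ x, ψ₀ ((r ^ n) • x) = (r ^ n) • ψ₀ x := by
    intro r hr n
    induction n with
    | zero => intro x; rw [pow_zero, one_smul, one_smul]
    | succ n ih => intro x; rw [pow_succ]; exact hPmul _ _ ih hr x
  have hPσ : ∀ x, ψ₀ (σ • x) = σ • ψ₀ x := hext σ hψσb
  have hPτ : ∀ x, ψ₀ (τ • x) = τ • ψ₀ x := hext τ hψτb
  have hPρ : ∀ x, ψ₀ ((rhoE p) • x) = (rhoE p) • ψ₀ x := by
    intro x
    rw [← hρστ]
    exact hPmul τ (σ ^ (k+1)) hPτ (hPpow σ hPσ (k+1)) x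
  have hPg : ∀ (a : cyc2p p), ∀ x, ψ₀ ((MonoidAlgebra.of ℤ (cyc2p p) a) • x)
      = (MonoidAlgebra.of ℤ (cyc2p p) a) • ψ₀ x := by
    intro a
    haveI : NeZero (2 * p) := ⟨by omega⟩
    have ha : MonoidAlgebra.of ℤ (cyc2p p) a = (rhoE p) ^ (a.toAdd).val := by
      rw [rhoE, ← map_pow]
      congr 1
      rw [rho, ← ofAdd_nsmul]
      simp only [nsmul_eq_mul, mul_one]
      rw [ZMod.natCast_val, ZMod.cast_id]
      rfl
    rw [ha]
    exact hPpow (rhoE p) hPρ (a.toAdd).val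
  have hP : ∀ (r : grpRing p) (x : M), ψ₀ (r • x) = r • ψ₀ x := by
    intro r
    induction r using MonoidAlgebra.induction_on with
    | of a => exact hPg a
    | add f g hf hg => intro x; rw [add_smul, map_add, hf x, hg x, add_smul]
    | smul z g hg =>
        intro x
        rw [smul_assoc, LinearMap.map_smul ψ₀ z (g • x), hg x, ← smul_assoc]
  set Ψ : M →ₗ[grpRing p] (grpRing p ⧸ J) :=
    { toFun := ψ₀, map_add' := fun x y => map_add ψ₀ x y, map_smul' := fun r x => hP r x }
    with hΨdef
  have hker : J ≤ LinearMap.ker (LinearMap.toSpanSingleton (grpRing p) M m) := by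
    rw [hJdef, Ideal.span_le]
    intro y hy
    rw [Set.mem_singleton_iff] at hy
    subst hy
    refine LinearMap.mem_ker.mpr ?_
    rw [LinearMap.toSpanSingleton_apply]
    exact hfm
  set Φ : (grpRing p ⧸ J) →ₗ[grpRing p] M :=
    Submodule.liftQ J (LinearMap.toSpanSingleton (grpRing p) M m) hker with hΦdef
  have hΦmk : ∀ r : grpRing p, Φ (J.mkQ r) = r • m := by
    intro r
    rw [hΦdef, Submodule.mkQ_apply, Submodule.liftQ_apply, LinearMap.toSpanSingleton_apply]
  have hcomp1 : Ψ.comp Φ = LinearMap.id := by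
    apply Submodule.linearMap_qext
    apply LinearMap.ext_ring
    simp only [LinearMap.comp_apply, LinearMap.id_apply]
    rw [show J.mkQ (1 : grpRing p) = Submodule.mkQ J 1 from rfl] at *
    have : Φ (J.mkQ 1) = m := by rw [hΦmk, one_smul]
    rw [this]
    show ψ₀ m = J.mkQ 1
    rw [hmdef, map_sub, hψl ⟨0, h0⟩, map_sum, hGw, ← map_sub]
    refine hmk _ _ (1 - σ * (T * (1 + τ))) ?_
    show σ ^ (0:ℕ) * ((σ - τ) * T) - (σ * N - 1) * (T * (1 + τ)) - 1 = _
    linear_combination hK2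
  have hbs : ∀ s, Φ (Ψ (b s)) = b s := by
    rintro (i | i)
    · show Φ (ψ₀ (b (Sum.inl i))) = _
      rw [hψl i, hΦmk, mul_smul, hmul1, hAu (i:ℕ) i.isLt]
    · show Φ (ψ₀ (b (Sum.inr i))) = _
      rw [hψr i, hΦmk]
      have hrw : σ ^ ((i:ℕ)+1) * (T * (1 + τ)) = σ ^ (i:ℕ) * (σ * (T * (1 + τ))) := by
        rw [pow_succ']; ring
      rw [hrw, mul_smul, hmul2, hAw (i:ℕ) i.isLt]
  have hcomp2 : Φ.comp Ψ = LinearMap.id := by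
    apply LinearMap.ext
    intro x
    have hx : x ∈ Submodule.span ℤ (Set.range b) := by
      rw [b.span_eq]; exact Submodule.mem_top
    simp only [LinearMap.comp_apply, LinearMap.id_apply]
    induction hx using Submodule.span_induction with
    | mem y hy => obtain ⟨s, rfl⟩ := hy; exact hbs s
    | zero => rw [map_zero, map_zero]
    | add y z _ _ hy' hz' => rw [map_add, map_add, hy', hz']
    | smul z y _ hy' => rw [map_zsmul, map_zsmul, hy']
  exact ⟨LinearEquiv.ofLinear Ψ Φ hcomp1 hcomp2⟩
end

section
/- Let G be a finite group acting faithfully on a field L, and extend the action to L(x₁,...,xₘ) so that each σ ∈ G maps the column vector (x₁,...,xₘ) to A(σ)(x₁,...,xₘ)ᵗ + B(σ) with A(σ) ∈ GL_m(L) and B(σ) an m×1 matrix over L. Then there exist z₁,...,zₘ ∈ L(x₁,...,xₘ), obtained from x₁,...,xₘ by an invertible affine change of variables over L, such that L(x₁,...,xₘ) = L(z₁,...,zₘ) and σ(zᵢ) = zᵢ for all σ ∈ G and all i. -/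
open scoped BigOperators

theorem hk_aux (L : Type*) [Field L] (m : ℕ) (G : Type*) [Group G] [Fintype G]
    (F : Type*) [Field F] (φ : G →* RingAut F) (e : L →+* F)
    (he_inj : Function.Injective e)
    (xx : Fin m → F)
    (hL : ∀ (σ : G) (a : L), ∃ b : L, φ σ (e a) = e b)
    (hfaith : ∀ σ : G, σ ≠ 1 → ∃ a : L, φ σ (e a) ≠ e a)
    (haff : ∀ σ : G, ∃ (A : Matrix (Fin m) (Fin m) L) (B : Fin m → L), IsUnit A.det ∧
      ∀ i : Fin m, φ σ (xx i) = ∑ j, e (A i j) * xx j + e (B i)) :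
    ∃ (A : Matrix (Fin m) (Fin m) L) (B : Fin m → L), IsUnit A.det ∧
      (∀ (σ : G) (i : Fin m),
        φ σ (∑ j, e (A i j) * xx j + e (B i)) = ∑ j, e (A i j) * xx j + e (B i)) ∧
      ∀ k : Fin m, xx k ∈ Subfield.closure (Set.range ⇑e ∪ Set.range (fun i : Fin m =>
        ∑ j, e (A i j) * xx j + e (B i))) := by
  classical
  -- the induced action on L
  choose ρ hρ using hL
  have hρ1 : ∀ a, ρ 1 a = a := by
    intro a
    apply he_inj
    rw [← hρ, map_one]
    rfl
  have hρmul : ∀ (σ τ : G) a, ρ (σ * τ) a = ρ σ (ρ τ a) := by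
    intro σ τ a
    apply he_inj
    rw [← hρ, map_mul]
    have : (φ σ * φ τ) (e a) = φ σ (φ τ (e a)) := rfl
    rw [this, hρ, hρ]
  have hρadd : ∀ (σ : G) (a b : L), ρ σ (a + b) = ρ σ a + ρ σ b := by
    intro σ a b
    apply he_inj
    rw [← hρ, map_add, map_add, map_add, hρ, hρ]
  have hρm : ∀ (σ : G) (a b : L), ρ σ (a * b) = ρ σ a * ρ σ b := by
    intro σ a b
    apply he_inj
    rw [← hρ, map_mul, map_mul, map_mul, hρ, hρ]
  have hρone : ∀ σ : G, ρ σ 1 = 1 := by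
    intro σ
    apply he_inj
    rw [← hρ]
    simp
  have hρzero : ∀ σ : G, ρ σ 0 = 0 := by
    intro σ
    apply he_inj
    rw [← hρ]
    simp
  have hρinv : ∀ (σ : G) (a : L), ρ σ (ρ σ⁻¹ a) = a := by
    intro σ a
    rw [← hρmul, mul_inv_cancel, hρ1]
  -- distinctness
  have hρdist : ∀ σ τ : G, ρ σ = ρ τ → σ = τ := by
    intro σ τ h
    by_contra hne
    obtain ⟨a, ha⟩ := hfaith (σ * τ⁻¹) (by
      intro hc
      exact hne (by rwa [mul_inv_eq_one] at hc))
    apply ha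
    rw [hρ, hρmul, h, hρinv]
  -- Dedekind independence
  have hDed : ∀ (g : G → L), (∀ c : L, ∑ σ : G, ρ σ c * g σ = 0) → ∀ σ : G, g σ = 0 := by
    intro g hg
    set μ : G → (L →* L) := fun σ =>
      { toFun := ρ σ, map_one' := hρone σ, map_mul' := hρm σ } with hμ
    have hμinj : Function.Injective μ := by
      intro σ τ h
      refine hρdist σ τ (funext fun a => ?_)
      exact DFunLike.congr_fun h a
    have hli : LinearIndependent L ((fun f : L →* L => (f : L → L)) ∘ μ) :=
      (linearIndependent_monoidHom L L).comp μ hμinj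
    refine Fintype.linearIndependent_iff.mp hli g ?_
    funext c
    have h1 : (∑ σ : G, g σ • ((fun f : L →* L => (f : L → L)) ∘ μ) σ) c
        = ∑ σ : G, g σ * ρ σ c := by
      simp [Finset.sum_apply, hμ]
    rw [h1]
    have := hg c
    rw [Finset.sum_congr rfl fun σ _ => mul_comm (g σ) (ρ σ c)]
    simpa using this
  -- data of the affine action
  choose Aa Bb hdet hup using haff
  -- the space of affine forms
  set Φ : ((Fin m → L) × L) → F := fun w => (∑ j, e (w.1 j) * xx j) + e w.2 with hΦ
  have hΦadd : ∀ w w' : ((Fin m → L) × L), Φ (w + w') = Φ w + Φ w' := by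
    intro w w'
    simp only [hΦ, Prod.fst_add, Prod.snd_add, Pi.add_apply, map_add, add_mul,
      Finset.sum_add_distrib]
    ring
  set Φh : ((Fin m → L) × L) →+ F := AddMonoidHom.mk' Φ hΦadd with hΦh
  set act : G → ((Fin m → L) × L) → ((Fin m → L) × L) := fun σ w =>
    (fun k => ∑ j, ρ σ (w.1 j) * Aa σ j k, (∑ j, ρ σ (w.1 j) * Bb σ j) + ρ σ w.2) with hact
  have key1 : ∀ (σ : G) (w : (Fin m → L) × L), φ σ (Φ w) = Φ (act σ w) := by
    intro σ w
    simp only [hΦ, hact, map_add, map_sum, map_mul, hρ, hup]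
    simp only [mul_add, add_mul, Finset.mul_sum, Finset.sum_mul,
      Finset.sum_add_distrib, mul_assoc, add_assoc]
    rw [Finset.sum_comm]
  have key2 : ∀ (σ : G) (c : L) (w : (Fin m → L) × L), act σ (c • w) = ρ σ c • act σ w := by
    intro σ c w
    have h1 : (c • w).1 = fun j => c * w.1 j := rfl
    have h2 : (c • w).2 = c * w.2 := rfl
    simp only [hact, h1, h2, hρm]
    refine Prod.ext ?_ ?_
    · funext k
      simp [Finset.mul_sum, mul_assoc]
    · simp [Finset.mul_sum, mul_assoc, mul_add]
  have key3 : ∀ (σ : G) (u : (Fin m → L) × L), ∃ w : (Fin m → L) × L, act σ w = u := by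
    intro σ u
    have hCA : (Aa σ)⁻¹ * Aa σ = 1 := Matrix.nonsing_inv_mul _ (hdet σ)
    refine ⟨(fun j => ρ σ⁻¹ (∑ l, u.1 l * (Aa σ)⁻¹ l j),
             ρ σ⁻¹ (u.2 - ∑ j, ρ σ (ρ σ⁻¹ (∑ l, u.1 l * (Aa σ)⁻¹ l j)) * Bb σ j)), ?_⟩
    refine Prod.ext ?_ ?_
    · funext k
      show (∑ j, ρ σ (ρ σ⁻¹ (∑ l, u.1 l * (Aa σ)⁻¹ l j)) * Aa σ j k) = u.1 k
      simp only [hρinv]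
      calc ∑ j, (∑ l, u.1 l * (Aa σ)⁻¹ l j) * Aa σ j k
          = ∑ j, ∑ l, u.1 l * ((Aa σ)⁻¹ l j * Aa σ j k) := by
            simp [Finset.sum_mul, mul_assoc]
        _ = ∑ l, u.1 l * ∑ j, (Aa σ)⁻¹ l j * Aa σ j k := by
            rw [Finset.sum_comm]
            simp [Finset.mul_sum]
        _ = ∑ l, u.1 l * ((Aa σ)⁻¹ * Aa σ) l k := by simp [Matrix.mul_apply]
        _ = u.1 k := by
            rw [hCA]
            simp [Matrix.one_apply]
    · show (∑ j, ρ σ (ρ σ⁻¹ (∑ l, u.1 l * (Aa σ)⁻¹ l j)) * Bb σ j) + ρ σ (ρ σ⁻¹ _) = u.2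
      simp only [hρinv]
      ring
  set S : Set ((Fin m → L) × L) := {w | ∀ σ : G, φ σ (Φ w) = Φ w} with hS
  have hTS : ∀ w : (Fin m → L) × L, (∑ σ : G, act σ w) ∈ S := by
    intro w τ
    have h1 : Φ (∑ σ : G, act σ w) = ∑ σ : G, φ σ (Φ w) := by
      rw [show Φ (∑ σ : G, act σ w) = Φh (∑ σ : G, act σ w) from rfl, map_sum]
      exact Finset.sum_congr rfl fun σ _ => (key1 σ w).symm
    rw [h1, map_sum]
    refine Fintype.sum_equiv (Equiv.mulLeft τ) _ _ (fun σ => ?_)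
    have h2 : φ τ (φ σ (Φ w)) = (φ τ * φ σ) (Φ w) := rfl
    rw [h2, ← map_mul]
    rfl
  have hspan : Submodule.span L S = ⊤ := by
    by_contra hne
    obtain ⟨f, hf0, hfbot⟩ := Submodule.exists_dual_map_eq_bot_of_lt_top
      (lt_top_iff_ne_top.mpr hne) inferInstance
    have hfS : ∀ w ∈ S, f w = 0 := by
      intro w hw
      have hmem : f w ∈ Submodule.map f (Submodule.span L S) :=
        Submodule.mem_map_of_mem (Submodule.subset_span hw)
      rwa [hfbot, Submodule.mem_bot] at hmem
    have hall : ∀ (σ : G) (w : (Fin m → L) × L), f (act σ w) = 0 := by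
      intro σ w
      refine hDed (fun τ => f (act τ w)) (fun c => ?_) σ
      have h0 := hfS _ (hTS (c • w))
      rw [map_sum] at h0
      rw [← h0]
      refine Finset.sum_congr rfl fun τ _ => ?_
      rw [key2, map_smul, smul_eq_mul]
    apply hf0
    refine LinearMap.ext fun u => ?_
    obtain ⟨w, hw⟩ := key3 1 u
    rw [← hw]
    simpa using hall 1 w
  -- project to the linear parts
  have hπ : Submodule.span L (Prod.fst '' S) = (⊤ : Submodule L (Fin m → L)) := by
    have h1 := congrArg (Submodule.map (LinearMap.fst L (Fin m → L) L)) hspan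
    rwa [← Submodule.span_image, Submodule.map_top, LinearMap.range_eq_top.mpr
      (fun w => ⟨(w, 0), rfl⟩)] at h1
  obtain ⟨b, hbsub, hbspan, hbind⟩ := exists_linearIndependent L (Prod.fst '' S)
  rw [hπ] at hbspan
  have hbtop : ⊤ ≤ Submodule.span L (Set.range (Subtype.val : b → (Fin m → L))) := by
    rw [Subtype.range_val]
    exact hbspan.ge
  let bas : Module.Basis b L (Fin m → L) := Module.Basis.mk hbind hbtop
  let eqv : b ≃ Fin m := bas.indexEquiv (Pi.basisFun L (Fin m))
  choose pre hpreS hpre1 using fun (x : b) => hbsub x.2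
  set v : Fin m → (Fin m → L) × L := fun i => pre (eqv.symm i) with hv
  set A : Matrix (Fin m) (Fin m) L := Matrix.of (fun i j => (v i).1 j) with hA
  set B : Fin m → L := fun i => (v i).2 with hB
  have hr : (fun i j => (v i).1 j) = ⇑(bas.reindex eqv) := by
    funext i
    rw [Module.Basis.reindex_apply]
    have h1 : (v i).1 = ((eqv.symm i : b) : Fin m → L) := hpre1 (eqv.symm i)
    rw [h1]
    have h2 : bas (eqv.symm i) = ((eqv.symm i : b) : Fin m → L) := by
      simp [bas, Module.Basis.coe_mk]
    rw [h2]
  have hdetA : IsUnit A.det := by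
    have h1 : LinearIndependent L (fun i j => (v i).1 j) ∧
        Submodule.span L (Set.range (fun i j => (v i).1 j)) = ⊤ := by
      rw [hr]
      exact ⟨(bas.reindex eqv).linearIndependent, (bas.reindex eqv).span_eq⟩
    have h2 := (Module.Basis.is_basis_iff_det (Pi.basisFun L (Fin m))).mp h1
    rwa [Pi.basisFun_det] at h2
  have hfix : ∀ (σ : G) (i : Fin m),
      φ σ (∑ j, e (A i j) * xx j + e (B i)) = ∑ j, e (A i j) * xx j + e (B i) := by
    intro σ i
    exact hpreS (eqv.symm i) σ
  refine ⟨A, B, hdetA, hfix, ?_⟩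
  intro k
  have hecl : ∀ a : L, e a ∈ Subfield.closure (Set.range ⇑e ∪ Set.range (fun i : Fin m =>
      ∑ j, e (A i j) * xx j + e (B i))) :=
    fun a => Subfield.subset_closure (Or.inl ⟨a, rfl⟩)
  have hzcl : ∀ i : Fin m, (∑ j, e (A i j) * xx j + e (B i)) ∈
      Subfield.closure (Set.range ⇑e ∪ Set.range (fun i : Fin m =>
      ∑ j, e (A i j) * xx j + e (B i))) :=
    fun i => Subfield.subset_closure (Or.inr ⟨i, rfl⟩)
  have hCA : A⁻¹ * A = 1 := Matrix.nonsing_inv_mul _ hdetA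
  have hxk : xx k = ∑ i, e (A⁻¹ k i) * ((∑ j, e (A i j) * xx j + e (B i)) - e (B i)) := by
    have hsub : ∀ i : Fin m, (∑ j, e (A i j) * xx j + e (B i)) - e (B i)
        = ∑ j, e (A i j) * xx j := fun i => add_sub_cancel_right _ _
    calc xx k = ∑ j, e ((1 : Matrix (Fin m) (Fin m) L) k j) * xx j := by
          simp [Matrix.one_apply, apply_ite ⇑e]
      _ = ∑ j, e ((A⁻¹ * A) k j) * xx j := by rw [hCA]
      _ = ∑ j, ∑ i, e (A⁻¹ k i) * (e (A i j) * xx j) := by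
          simp [Matrix.mul_apply, map_sum, Finset.sum_mul, mul_assoc]
      _ = ∑ i, e (A⁻¹ k i) * ∑ j, e (A i j) * xx j := by
          rw [Finset.sum_comm]
          simp [Finset.mul_sum]
      _ = ∑ i, e (A⁻¹ k i) * ((∑ j, e (A i j) * xx j + e (B i)) - e (B i)) := by
          simp only [hsub]
  rw [hxk]
  exact Subfield.sum_mem _ fun i _ => mul_mem (hecl _) (sub_mem (hzcl i) (hecl _))


set_option synthInstance.maxHeartbeats 1000000 in
set_option maxHeartbeats 1000000 in
/-- Hajja–Kang linearization (Theorem 1 of [HK2]): let a finite group `G` act by field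
automorphisms on the rational function field `F = L(x₁,…,xₘ)` so that the action maps `L`
to itself, restricts faithfully to `L`, and is `L`-affine on the variables:
`σ(xᵢ) = Σⱼ A(σ)ᵢⱼ xⱼ + B(σ)ᵢ` with `A(σ) ∈ GLₘ(L)`. Then there is an invertible affine
change of variables `zᵢ = Σⱼ Aᵢⱼ xⱼ + Bᵢ` over `L` with `L(x₁,…,xₘ) = L(z₁,…,zₘ)` and
`σ(zᵢ) = zᵢ` for all `σ ∈ G` and all `i`. -/
theorem hajja_kang_linearization
    (L : Type*) [Field L] (m : ℕ) (G : Type*) [Group G] [Finite G]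
    (φ : G →* RingAut (FractionRing (MvPolynomial (Fin m) L)))
    (e : L →+* FractionRing (MvPolynomial (Fin m) L))
    (he : e = (algebraMap (MvPolynomial (Fin m) L)
      (FractionRing (MvPolynomial (Fin m) L))).comp MvPolynomial.C)
    -- the action maps `L` into itself
    (hL : ∀ (σ : G) (a : L), ∃ b : L, φ σ (e a) = e b)
    -- the restriction of the action to `L` is faithful
    (hfaith : ∀ σ : G, σ ≠ 1 → ∃ a : L, φ σ (e a) ≠ e a)
    -- the action is affine on the variables, with invertible linear part over `L`
    (haff : ∀ σ : G, ∃ (A : Matrix (Fin m) (Fin m) L) (B : Fin m → L), IsUnit A.det ∧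
      ∀ i : Fin m, φ σ (algebraMap (MvPolynomial (Fin m) L) _ (MvPolynomial.X i)) =
        ∑ j, e (A i j) * algebraMap (MvPolynomial (Fin m) L) _ (MvPolynomial.X j) + e (B i)) :
    ∃ (A : Matrix (Fin m) (Fin m) L) (B : Fin m → L), IsUnit A.det ∧
      (∀ (σ : G) (i : Fin m),
        φ σ (∑ j, e (A i j) * algebraMap (MvPolynomial (Fin m) L) _ (MvPolynomial.X j) + e (B i)) =
          ∑ j, e (A i j) * algebraMap (MvPolynomial (Fin m) L) _ (MvPolynomial.X j) + e (B i)) ∧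
      Subfield.closure (Set.range ⇑e ∪ Set.range (fun i : Fin m =>
        ∑ j, e (A i j) * algebraMap (MvPolynomial (Fin m) L) _ (MvPolynomial.X j) + e (B i))) = ⊤ := by
    classical
  cases nonempty_fintype G
  have he_inj : Function.Injective e := by
    rw [he, RingHom.coe_comp]
    exact (IsFractionRing.injective (MvPolynomial (Fin m) L)
      (FractionRing (MvPolynomial (Fin m) L))).comp (MvPolynomial.C_injective (Fin m) L)
  obtain ⟨A, B, hdet, hfix, hmem⟩ := hk_aux L m G _ φ e he_inj
    (fun j => algebraMap (MvPolynomial (Fin m) L) _ (MvPolynomial.X j)) hL hfaith haff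
  refine ⟨A, B, hdet, hfix, ?_⟩
  rw [eq_top_iff]
  rintro y -
  have hecl : ∀ a : L, e a ∈ Subfield.closure (Set.range ⇑e ∪ Set.range (fun i : Fin m =>
      ∑ j, e (A i j) * algebraMap (MvPolynomial (Fin m) L) _ (MvPolynomial.X j) + e (B i))) :=
    fun a => Subfield.subset_closure (Or.inl ⟨a, rfl⟩)
  have halg : ∀ p : MvPolynomial (Fin m) L,
      algebraMap (MvPolynomial (Fin m) L) (FractionRing (MvPolynomial (Fin m) L)) p ∈
      Subfield.closure (Set.range ⇑e ∪ Set.range (fun i : Fin m =>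
      ∑ j, e (A i j) * algebraMap (MvPolynomial (Fin m) L) _ (MvPolynomial.X j) + e (B i))) := by
    intro p
    induction p using MvPolynomial.induction_on with
    | C a =>
        have h1 : algebraMap (MvPolynomial (Fin m) L) (FractionRing (MvPolynomial (Fin m) L))
            (MvPolynomial.C a) = e a := by rw [he]; rfl
        rw [h1]
        exact hecl a
    | add p q hp hq =>
        rw [map_add (algebraMap (MvPolynomial (Fin m) L) (FractionRing (MvPolynomial (Fin m) L)))]
        exact add_mem hp hq
    | mul_X p i hp =>
        rw [map_mul (algebraMap (MvPolynomial (Fin m) L) (FractionRing (MvPolynomial (Fin m) L)))]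
        exact mul_mem hp (hmem i)
  obtain ⟨p, q, -, rfl⟩ := IsFractionRing.div_surjective (A := MvPolynomial (Fin m) L) y
  exact div_mem (halg p) (halg q)
end
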